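/- T_H semantically entails H⁻ ∉ H⁻. -/

import Mathlib

open FirstOrder FirstOrder.Language

namespace CoRussellParadox

/-- The language `L'` with a single binary relation symbol `∈` and four constant
symbols `A`, `B`, `H⁺`, `H⁻` (coded as `Fin 4`). -/
def L : Language :=
  ⟨fun n => match n with | 0 => Fin 4 | _ => Empty,
   fun n => match n with | 2 => Unit | _ => Empty⟩

/-- The membership relation symbol. -/
def memRel : L.Relations 2 := Unit.unit

/-- The constant symbol `A`. -/
def cA : L.Constants := (0 : Fin 4)
/-- The constant symbol `B`. -/
def cB : L.Constants := (1 : Fin 4)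
/-- The constant symbol `H⁺`. -/
def cHp : L.Constants := (2 : Fin 4)
/-- The constant symbol `H⁻`. -/
def cHm : L.Constants := (3 : Fin 4)

/-- `memF t₁ t₂` is the atomic formula `t₁ ∈ t₂`. -/
def memF {n : ℕ} (t₁ t₂ : L.Term (Empty ⊕ Fin n)) : L.BoundedFormula Empty n :=
  memRel.boundedFormula₂ t₁ t₂

/-- Inclusion of a term in context `n` into the larger context `n + k`. -/
def tl {n : ℕ} (k : ℕ) (t : L.Term (Empty ⊕ Fin n)) : L.Term (Empty ⊕ Fin (n + k)) :=
  t.relabel (Sum.map id (Fin.castAdd k))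

/-- `z = ⟨a,b⟩` (Kuratowski pair), as the formula
`∃p∃q(∀x(x∈p ↔ x=a) ∧ ∀x(x∈q ↔ (x=a ∨ x=b)) ∧ ∀x(x∈z ↔ (x=p ∨ x=q)))`. -/
def isPairF {n : ℕ} (z a b : L.Term (Empty ⊕ Fin n)) : L.BoundedFormula Empty n :=
  ∃' ∃' (
    (∀' (memF (&⟨n + 2, by omega⟩) (&⟨n, by omega⟩) ⇔
        ((&(⟨n + 2, by omega⟩ : Fin (n + 3))) =' tl 3 a))) ⊓
    (∀' (memF (&⟨n + 2, by omega⟩) (&⟨n + 1, by omega⟩) ⇔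
        (((&(⟨n + 2, by omega⟩ : Fin (n + 3))) =' tl 3 a) ⊔
         ((&(⟨n + 2, by omega⟩ : Fin (n + 3))) =' tl 3 b)))) ⊓
    (∀' (memF (&⟨n + 2, by omega⟩) (tl 3 z) ⇔
        (((&(⟨n + 2, by omega⟩ : Fin (n + 3))) =' (&⟨n, by omega⟩)) ⊔
         ((&(⟨n + 2, by omega⟩ : Fin (n + 3))) =' (&⟨n + 1, by omega⟩))))))

/-- Extensionality: `∀y∀z(∀x(x∈y ↔ x∈z) → y=z)`. -/
def extAx : L.Sentence :=
  ∀' ∀' ((∀' (memF (&2) (&0) ⇔ memF (&2) (&1))) ⟹ ((&0) =' (&1)))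

/-- Pairing: `∀a∀b∃y∀x(x∈y ↔ (x=a ∨ x=b))`. -/
def pairAx : L.Sentence :=
  ∀' ∀' ∃' ∀' (memF (&3) (&2) ⇔ (((&3) =' (&0)) ⊔ ((&3) =' (&1))))

/-- Extracting: `∀a∃y∀x(x∈y ↔ ∃z(z=⟨a,x⟩ ∧ z∈a))`. -/
def extractAx : L.Sentence :=
  ∀' ∃' ∀' (memF (&2) (&1) ⇔ ∃' (isPairF (&3) (&0) (&2) ⊓ memF (&3) (&0)))

/-- `w = v[v]`, i.e. `∀u(u∈w ↔ ∃z(z=⟨v,u⟩ ∧ z∈v))`, here with `v = &1`, `w = &2`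
in context `3` (as used in the axioms for `A` and `B`). -/
def wEqExtractF : L.BoundedFormula Empty 3 :=
  ∀' (memF (&3) (&2) ⇔ ∃' (isPairF (&4) (&1) (&3) ⊓ memF (&4) (&1)))

/-- The axiom `∀x(x∈A ↔ ∃v∃w(x=⟨v,w⟩ ∧ (w∈w ∨ w=v[v])))`. -/
def axA : L.Sentence :=
  ∀' (memF (&0) (Constants.term cA) ⇔
    ∃' ∃' (isPairF (&0) (&1) (&2) ⊓ (memF (&2) (&2) ⊔ wEqExtractF)))

/-- The axiom `∀x(x∈B ↔ ∃v∃w(x=⟨v,w⟩ ∧ (w∈w ∧ ¬w=v[v])))`. -/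
def axB : L.Sentence :=
  ∀' (memF (&0) (Constants.term cB) ⇔
    ∃' ∃' (isPairF (&0) (&1) (&2) ⊓ (memF (&2) (&2) ⊓ ∼wEqExtractF)))

/-- The axiom `∀x(x∈H⁺ ↔ ∃z(z=⟨A,x⟩ ∧ z∈A))`. -/
def axHp : L.Sentence :=
  ∀' (memF (&0) (Constants.term cHp) ⇔
    ∃' (isPairF (&1) (Constants.term cA) (&0) ⊓ memF (&1) (Constants.term cA)))

/-- The axiom `∀x(x∈H⁻ ↔ ∃z(z=⟨B,x⟩ ∧ z∈B))`. -/
def axHm : L.Sentence :=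
  ∀' (memF (&0) (Constants.term cHm) ⇔
    ∃' (isPairF (&1) (Constants.term cB) (&0) ⊓ memF (&1) (Constants.term cB)))

/-- The theory `T_H`: extensionality, pairing, extracting, and the defining axioms
of `A`, `B`, `H⁺` and `H⁻`. -/
def TH : L.Theory := {extAx, pairAx, extractAx, axA, axB, axHp, axHm}

section Aux
set_option linter.unusedSectionVars false
variable {M : Type*} [L.Structure M]

def mem (x y : M) : Prop := Structure.RelMap memRel ![x, y]

def PairM (z a b : M) : Prop :=
  ∃ p q : M, (∀ x, mem x p ↔ x = a) ∧ (∀ x, mem x q ↔ x = a ∨ x = b) ∧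
    (∀ x, mem x z ↔ x = p ∨ x = q)

def EqExtM (w v : M) : Prop := ∀ u, mem u w ↔ ∃ z, PairM z v u ∧ mem z v

@[simp] lemma snoc3_two {n} (xs : Fin n → M) (p q r : M) (h : n + 2 < n + 3) :
    (Fin.snoc (Fin.snoc (Fin.snoc xs p) q) r : Fin (n+3) → M) ⟨n + 2, h⟩ = r := by
  simp [Fin.snoc]

@[simp] lemma snoc3_one {n} (xs : Fin n → M) (p q r : M) (h : n + 1 < n + 3) :
    (Fin.snoc (Fin.snoc (Fin.snoc xs p) q) r : Fin (n+3) → M) ⟨n + 1, h⟩ = q := by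
  simp [Fin.snoc]

@[simp] lemma snoc3_zero {n} (xs : Fin n → M) (p q r : M) (h : n < n + 3) :
    (Fin.snoc (Fin.snoc (Fin.snoc xs p) q) r : Fin (n+3) → M) ⟨n, h⟩ = p := by
  simp [Fin.snoc]

@[simp] lemma snoc3_castAdd {n} (xs : Fin n → M) (p q r : M) (j : Fin n) :
    (Fin.snoc (Fin.snoc (Fin.snoc xs p) q) r : Fin (n+3) → M) (Fin.castAdd 3 j) = xs j := by
  have e : Fin.castAdd 3 j = ((j.castSucc).castSucc).castSucc := rfl
  rw [e, Fin.snoc_castSucc, Fin.snoc_castSucc, Fin.snoc_castSucc]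

@[simp] lemma elim_comp_map {n} (v : Empty → M) (xs : Fin n → M) (p q r : M) :
    Sum.elim v (Fin.snoc (Fin.snoc (Fin.snoc xs p) q) r) ∘ Sum.map id (Fin.castAdd 3) =
      Sum.elim v xs := by
  funext x; cases x with
  | inl e => exact e.elim
  | inr j => simpa using snoc3_castAdd xs p q r j

-- numeral snoc evaluation lemmas
@[simp] lemma s1_0 (ys : Fin 0 → M) (x : M) : (Fin.snoc ys x : Fin 1 → M) 0 = x := by
  simp [Fin.snoc, show ((0:Fin 1):ℕ) = 0 from rfl]
@[simp] lemma s2_0 (ys : Fin 1 → M) (x : M) : (Fin.snoc ys x : Fin 2 → M) 0 = ys 0 := by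
  simp [Fin.snoc, show ((0:Fin 2):ℕ) = 0 from rfl]
@[simp] lemma s2_1 (ys : Fin 1 → M) (x : M) : (Fin.snoc ys x : Fin 2 → M) 1 = x := by
  simp [Fin.snoc, show ((1:Fin 2):ℕ) = 1 from rfl]
@[simp] lemma s3_0 (ys : Fin 2 → M) (x : M) : (Fin.snoc ys x : Fin 3 → M) 0 = ys 0 := by
  simp [Fin.snoc, show ((0:Fin 3):ℕ) = 0 from rfl]
@[simp] lemma s3_1 (ys : Fin 2 → M) (x : M) : (Fin.snoc ys x : Fin 3 → M) 1 = ys 1 := by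
  simp [Fin.snoc, show ((1:Fin 3):ℕ) = 1 from rfl]
@[simp] lemma s3_2 (ys : Fin 2 → M) (x : M) : (Fin.snoc ys x : Fin 3 → M) 2 = x := by
  simp [Fin.snoc, show ((2:Fin 3):ℕ) = 2 from rfl]
@[simp] lemma s4_3 (ys : Fin 3 → M) (x : M) : (Fin.snoc ys x : Fin 4 → M) 3 = x := by
  simp [Fin.snoc, show ((3:Fin 4):ℕ) = 3 from rfl]
@[simp] lemma s4_2 (ys : Fin 3 → M) (x : M) : (Fin.snoc ys x : Fin 4 → M) 2 = ys 2 := by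
  simp [Fin.snoc, show ((2:Fin 4):ℕ) = 2 from rfl]; rfl
@[simp] lemma s4_1 (ys : Fin 3 → M) (x : M) : (Fin.snoc ys x : Fin 4 → M) 1 = ys 1 := by
  simp [Fin.snoc, show ((1:Fin 4):ℕ) = 1 from rfl]
@[simp] lemma s5_4 (ys : Fin 4 → M) (x : M) : (Fin.snoc ys x : Fin 5 → M) 4 = x := by
  simp [Fin.snoc, show ((4:Fin 5):ℕ) = 4 from rfl]
@[simp] lemma s5_3 (ys : Fin 4 → M) (x : M) : (Fin.snoc ys x : Fin 5 → M) 3 = ys 3 := by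
  simp [Fin.snoc, show ((3:Fin 5):ℕ) = 3 from rfl]; rfl
@[simp] lemma s5_1 (ys : Fin 4 → M) (x : M) : (Fin.snoc ys x : Fin 5 → M) 1 = ys 1 := by
  simp [Fin.snoc, show ((1:Fin 5):ℕ) = 1 from rfl]

lemma realize_memF {n} {t₁ t₂ : L.Term (Empty ⊕ Fin n)} {v : Empty → M} {xs : Fin n → M} :
    (memF t₁ t₂).Realize v xs ↔ mem (t₁.realize (Sum.elim v xs)) (t₂.realize (Sum.elim v xs)) := by
  simp [memF, mem, BoundedFormula.realize_rel₂]

lemma realize_isPairF {n} {z a b : L.Term (Empty ⊕ Fin n)} {v : Empty → M} {xs : Fin n → M} :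
    (isPairF z a b).Realize v xs ↔
      PairM (z.realize (Sum.elim v xs)) (a.realize (Sum.elim v xs)) (b.realize (Sum.elim v xs)) := by
  simp only [isPairF, PairM, BoundedFormula.realize_ex, BoundedFormula.realize_inf,
    BoundedFormula.realize_all, BoundedFormula.realize_iff, realize_memF,
    BoundedFormula.realize_sup, BoundedFormula.realize_bdEqual, tl,
    Term.realize_relabel, Term.realize_var, Function.comp_apply, Sum.elim_inr,
    snoc3_two, snoc3_one, snoc3_zero, elim_comp_map, and_assoc]

lemma realize_wEqExtractF {v : Empty → M} {xs : Fin 3 → M} :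
    wEqExtractF.Realize v xs ↔ EqExtM (xs 2) (xs 1) := by
  simp only [wEqExtractF, EqExtM, BoundedFormula.realize_all, BoundedFormula.realize_iff,
    BoundedFormula.realize_ex, BoundedFormula.realize_inf, realize_memF, realize_isPairF,
    Term.realize_var, Sum.elim_inr, Function.comp_apply, s4_3, s4_2, s4_1, s5_4, s5_3, s5_1]

lemma pair_inj {z a b v w : M} (h1 : PairM z a b) (h2 : PairM z v w) : a = v ∧ b = w := by
  obtain ⟨p, q, hp, hq, hz⟩ := h1
  obtain ⟨p', q', hp', hq', hz'⟩ := h2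
  have hpmem : p = p' ∨ p = q' := (hz' p).mp ((hz p).mpr (Or.inl rfl))
  have hqmem : q = p' ∨ q = q' := (hz' q).mp ((hz q).mpr (Or.inr rfl))
  have hq'mem : q' = p ∨ q' = q := (hz q').mp ((hz' q').mpr (Or.inr rfl))
  have hav : a = v := by
    rcases hpmem with h | h
    · exact (hp' a).mp (h ▸ (hp a).mpr rfl)
    · exact ((hp v).mp (h ▸ (hq' v).mpr (Or.inl rfl))).symm
  refine ⟨hav, ?_⟩
  rcases hq'mem with h | h
  · -- q' = p, so w = a
    have hwa : w = a := (hp w).mp (h ▸ (hq' w).mpr (Or.inr rfl))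
    rcases hqmem with h2 | h2
    · -- q = p', so b = v
      have hbv : b = v := (hp' b).mp (h2 ▸ (hq b).mpr (Or.inr rfl))
      rw [hbv, ← hav, ← hwa]
    · -- q = q' = p, so b = a
      have hba : b = a := (hp b).mp (h ▸ h2 ▸ (hq b).mpr (Or.inr rfl))
      rw [hba, ← hwa]
  · -- q' = q
    have hw : w = a ∨ w = b := (hq w).mp (h ▸ (hq' w).mpr (Or.inr rfl))
    have hbq' : mem b q' := by rw [h]; exact (hq b).mpr (Or.inr rfl)
    rcases (hq' b).mp hbq' with hb | hb
    · rcases hw with hw | hw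
      · rw [hb, ← hav, ← hw]
      · exact hw.symm
    · exact hb

end Aux

/-- `T_H` semantically entails `H⁻ ∉ H⁻`. -/
theorem TH_Hm_not_mem_Hm :
    TH ⊨ᵇ ((∼(memF (Constants.term cHm) (Constants.term cHm))) : L.Sentence) := by
  rw [Theory.models_sentence_iff]
  intro M
  have hB : M ⊨ axB := M.is_model.realize_of_mem axB (by simp [TH])
  have hHm : M ⊨ axHm := M.is_model.realize_of_mem axHm (by simp [TH])
  simp only [axB, axHm, Sentence.Realize, Formula.Realize, BoundedFormula.realize_all,
    BoundedFormula.realize_iff, BoundedFormula.realize_ex, BoundedFormula.realize_inf,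
    BoundedFormula.realize_not, realize_memF, realize_isPairF, realize_wEqExtractF,
    Term.realize_var, Term.realize_constants, Sum.elim_inr, Function.comp_apply,
    s1_0, s2_0, s2_1, s3_0, s3_1, s3_2] at hB hHm ⊢
  intro hmem
  obtain ⟨z, hzpair, hzB⟩ := (hHm _).mp hmem
  obtain ⟨v, w, hzvw, hww, hnEq⟩ := (hB z).mp hzB
  obtain ⟨hv, hw⟩ := pair_inj hzpair hzvw
  refine hnEq ?_
  rw [← hv, ← hw]
  exact fun u => hHm u

end CoRussellParadox
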